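/- Let μ and ν be finite positive Radon Borel measures on K. Then μ ≼ ν and ν ≼ μ hold simultaneously if and only if the pushforward measures of μ and ν under the quotient map q coincide, i.e. q♯μ = q♯ν. -/

import Mathlib

open MeasureTheory

/-- `Wt M` is the set `W = {(x,y) ∈ M × M : x ≠ y}`, a topological subspace of `M × M`. -/
abbrev Wt (M : Type*) [MetricSpace M] := {p : M × M // p.1 ≠ p.2}

/-- `g : W → ℝ` satisfies the G-inequality. -/
def GIneq {M : Type*} [MetricSpace M] (g : Wt M → ℝ) : Prop :=
  ∀ (x u y : M) (hxu : x ≠ u) (huy : u ≠ y) (hxy : x ≠ y),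
    dist x y * g ⟨(x, y), hxy⟩ ≤ dist x u * g ⟨(x, u), hxu⟩ + dist u y * g ⟨(u, y), huy⟩

/-- The cone `G` of continuous functions on `K = βW` satisfying the G-inequality
on points of `W`. -/
def GSet (M : Type*) [MetricSpace M] : Set (StoneCech (Wt M) → ℝ) :=
  {g | Continuous g ∧ GIneq fun p => g (stoneCechUnit p)}

/-- The Choquet-like quasi-order `μ ≼ ν`. -/
def Preceq {M : Type*} [MetricSpace M] [MeasurableSpace (StoneCech (Wt M))]
    (μ ν : Measure (StoneCech (Wt M))) : Prop :=
  ∀ g ∈ GSet M, ∫ ζ, g ζ ∂μ ≤ ∫ ζ, g ζ ∂ν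

/-- `μ` is `≼`-minimal among finite positive Radon Borel measures. -/
def IsMinimal {M : Type*} [MetricSpace M] [MeasurableSpace (StoneCech (Wt M))]
    (μ : Measure (StoneCech (Wt M))) : Prop :=
  ∀ ν : Measure (StoneCech (Wt M)),
    IsFiniteMeasure ν → ν.InnerRegular → Preceq ν μ → Preceq μ ν

/-- The equivalence relation `ζ ∼ ω` iff `g ζ = g ω` for all `g ∈ G`. -/
def gSetoid (M : Type*) [MetricSpace M] : Setoid (StoneCech (Wt M)) where
  r ζ ω := ∀ g ∈ GSet M, g ζ = g ω
  iseqv := ⟨fun _ _ _ => rfl, fun h g hg => (h g hg).symm,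
    fun h1 h2 g hg => (h1 g hg).trans (h2 g hg)⟩

/-- The quotient map `q : K → K/∼`. -/
def gq (M : Type*) [MetricSpace M] :
    StoneCech (Wt M) → Quotient (gSetoid M) := Quotient.mk _

section Aux

variable {M : Type*} [MetricSpace M]

lemma GSet.const_mem {c : ℝ} (hc : 0 ≤ c) : (fun _ : StoneCech (Wt M) => c) ∈ GSet M := by
  refine ⟨continuous_const, fun x u y hxu huy hxy => ?_⟩
  have h := dist_triangle x u y
  nlinarith

lemma GSet.add_mem {g h : StoneCech (Wt M) → ℝ} (hg : g ∈ GSet M) (hh : h ∈ GSet M) :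
    (fun ζ => g ζ + h ζ) ∈ GSet M := by
  refine ⟨hg.1.add hh.1, fun x u y hxu huy hxy => ?_⟩
  have h1 := hg.2 x u y hxu huy hxy
  have h2 := hh.2 x u y hxu huy hxy
  dsimp only at h1 h2 ⊢
  nlinarith

lemma GSet.smul_mem {c : ℝ} (hc : 0 ≤ c) {g : StoneCech (Wt M) → ℝ} (hg : g ∈ GSet M) :
    (fun ζ => c * g ζ) ∈ GSet M := by
  refine ⟨continuous_const.mul hg.1, fun x u y hxu huy hxy => ?_⟩
  have h1 := hg.2 x u y hxu huy hxy
  dsimp only at h1 ⊢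
  nlinarith

lemma GSet.max_mem {g h : StoneCech (Wt M) → ℝ} (hg : g ∈ GSet M) (hh : h ∈ GSet M) :
    (fun ζ => max (g ζ) (h ζ)) ∈ GSet M := by
  refine ⟨hg.1.max hh.1, fun x u y hxu huy hxy => ?_⟩
  have h1 := hg.2 x u y hxu huy hxy
  have h2 := hh.2 x u y hxu huy hxy
  dsimp only at h1 h2 ⊢
  rw [mul_max_of_nonneg _ _ dist_nonneg]
  refine max_le ?_ ?_
  · exact h1.trans (add_le_add (mul_le_mul_of_nonneg_left (le_max_left _ _) dist_nonneg)
      (mul_le_mul_of_nonneg_left (le_max_left _ _) dist_nonneg))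
  · exact h2.trans (add_le_add (mul_le_mul_of_nonneg_left (le_max_right _ _) dist_nonneg)
      (mul_le_mul_of_nonneg_left (le_max_right _ _) dist_nonneg))

/-- The lift of `g ∈ G` to the quotient, as a continuous map. -/
noncomputable def glift {g : StoneCech (Wt M) → ℝ} (hg : g ∈ GSet M) :
    C(Quotient (gSetoid M), ℝ) :=
  ⟨Quotient.lift g (fun _ _ hab => hab g hg), hg.1.quotient_lift _⟩

@[simp] lemma glift_mk {g : StoneCech (Wt M) → ℝ} (hg : g ∈ GSet M)
    (ζ : StoneCech (Wt M)) : glift hg (gq M ζ) = g ζ := rfl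

lemma continuous_gq : Continuous (gq M) := continuous_quotient_mk'

/-- Affine images of elements of `G` are differences of elements of `G`. -/
lemma exists_affine {g : StoneCech (Wt M) → ℝ} (hg : g ∈ GSet M) (β α : ℝ) :
    ∃ g' ∈ GSet M, ∃ h' ∈ GSet M, ∀ ζ, β * g ζ + α = g' ζ - h' ζ := by
  rcases le_total 0 β with hβ | hβ
  · refine ⟨fun ζ => β * g ζ + max α 0,
      GSet.add_mem (GSet.smul_mem hβ hg) (GSet.const_mem (le_max_right _ _)),
      fun _ => max (-α) 0, GSet.const_mem (le_max_right _ _), fun ζ => ?_⟩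
    have := max_zero_sub_eq_self α
    dsimp only
    linarith
  · refine ⟨fun _ => max α 0, GSet.const_mem (le_max_right _ _),
      fun ζ => (-β) * g ζ + max (-α) 0,
      GSet.add_mem (GSet.smul_mem (neg_nonneg.2 hβ) hg) (GSet.const_mem (le_max_right _ _)),
      fun ζ => ?_⟩
    have := max_zero_sub_eq_self α
    dsimp only
    nlinarith [this]

end Aux

theorem stmt8 {M : Type*} [MetricSpace M]
    [MeasurableSpace (StoneCech (Wt M))] [BorelSpace (StoneCech (Wt M))]
    [MeasurableSpace (Quotient (gSetoid M))] [BorelSpace (Quotient (gSetoid M))]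
    (h3 : ∃ x y z : M, x ≠ y ∧ x ≠ z ∧ y ≠ z)
    (μ ν : Measure (StoneCech (Wt M)))
    [IsFiniteMeasure μ] [IsFiniteMeasure ν] [μ.InnerRegular] [ν.InnerRegular] :
    (Preceq μ ν ∧ Preceq ν μ) ↔ Measure.map (gq M) μ = Measure.map (gq M) ν := by
  clear h3
  have hq_cont : Continuous (gq M) := continuous_gq
  have hq_meas : Measurable (gq M) := hq_cont.measurable
  -- integrability of continuous functions on the compact spaces involved
  have hintK : ∀ (m : Measure (StoneCech (Wt M))) [IsFiniteMeasure m]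
      (g : StoneCech (Wt M) → ℝ), Continuous g → Integrable g m := by
    intro m _ g hg
    exact hg.integrable_of_hasCompactSupport (HasCompactSupport.of_compactSpace g)
  have hintQ : ∀ (m : Measure (Quotient (gSetoid M))) [IsFiniteMeasure m] (f : C(Quotient (gSetoid M), ℝ)), Integrable f m := by
    intro m _ f
    exact f.continuous.integrable_of_hasCompactSupport (HasCompactSupport.of_compactSpace f)
  -- transfer of integrals through the quotient map
  have key : ∀ (m : Measure (StoneCech (Wt M))) {g : StoneCech (Wt M) → ℝ} (hg : g ∈ GSet M),
      ∫ ζ, g ζ ∂m = ∫ t, glift hg t ∂(Measure.map (gq M) m) := by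
    intro m g hg
    rw [integral_map hq_meas.aemeasurable (glift hg).continuous.aestronglyMeasurable]
    rfl
  constructor
  · rintro ⟨hpre1, hpre2⟩
    have heq : ∀ g ∈ GSet M, ∫ ζ, g ζ ∂μ = ∫ ζ, g ζ ∂ν := fun g hg =>
      le_antisymm (hpre1 g hg) (hpre2 g hg)
    -- the quotient is compact Hausdorff
    haveI : T2Space (Quotient (gSetoid M)) := by
      constructor
      intro x y hxy
      obtain ⟨ζ, rfl⟩ := Quotient.exists_rep x
      obtain ⟨ω, rfl⟩ := Quotient.exists_rep y
      have hne : ¬ ∀ g ∈ GSet M, g ζ = g ω := fun h => hxy (Quotient.sound h)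
      push_neg at hne
      obtain ⟨g, hg, hgne⟩ := hne
      exact separated_by_continuous (glift hg).continuous hgne
    set μ' := Measure.map (gq M) μ with hμ'
    set ν' := Measure.map (gq M) ν with hν'
    haveI : IsFiniteMeasure μ' := Measure.isFiniteMeasure_map μ _
    haveI : IsFiniteMeasure ν' := Measure.isFiniteMeasure_map ν _
    haveI : μ'.InnerRegular := Measure.InnerRegular.map_of_continuous hq_cont
    haveI : ν'.InnerRegular := Measure.InnerRegular.map_of_continuous hq_cont
    -- the set of functions represented by differences of lifted elements of `G`
    set A : Set C(Quotient (gSetoid M), ℝ) :=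
      {f | ∃ g ∈ GSet M, ∃ h ∈ GSet M, ∀ ζ, f (gq M ζ) = g ζ - h ζ} with hA
    -- Stone-Weierstrass for the sublattice `A`
    have hclos : closure A = (Set.univ : Set C(Quotient (gSetoid M), ℝ)) := by
      have := ContinuousMap.sublattice_closure_eq_top A
        ⟨0, (fun _ => (1 : ℝ)), GSet.const_mem zero_le_one,
          (fun _ => (1 : ℝ)), GSet.const_mem zero_le_one, fun ζ => by simp⟩
        (by
          rintro f₁ ⟨g₁, hg₁, h₁, hh₁, hr₁⟩ f₂ ⟨g₂, hg₂, h₂, hh₂, hr₂⟩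
          refine ⟨fun ζ => g₁ ζ + g₂ ζ, GSet.add_mem hg₁ hg₂,
            fun ζ => max (h₁ ζ + g₂ ζ) (h₂ ζ + g₁ ζ),
            GSet.max_mem (GSet.add_mem hh₁ hg₂) (GSet.add_mem hh₂ hg₁), fun ζ => ?_⟩
          have e1 := hr₁ ζ; have e2 := hr₂ ζ
          show min (f₁ (gq M ζ)) (f₂ (gq M ζ)) = _
          rw [e1, e2]
          dsimp only
          rcases le_total (g₁ ζ - h₁ ζ) (g₂ ζ - h₂ ζ) with h | h
          · rw [min_eq_left h, max_eq_left (by linarith)]; ring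
          · rw [min_eq_right h, max_eq_right (by linarith)]; ring)
        (by
          rintro f₁ ⟨g₁, hg₁, h₁, hh₁, hr₁⟩ f₂ ⟨g₂, hg₂, h₂, hh₂, hr₂⟩
          refine ⟨fun ζ => max (g₁ ζ + h₂ ζ) (g₂ ζ + h₁ ζ),
            GSet.max_mem (GSet.add_mem hg₁ hh₂) (GSet.add_mem hg₂ hh₁),
            fun ζ => h₁ ζ + h₂ ζ, GSet.add_mem hh₁ hh₂, fun ζ => ?_⟩
          have e1 := hr₁ ζ; have e2 := hr₂ ζ
          show max (f₁ (gq M ζ)) (f₂ (gq M ζ)) = _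
          rw [e1, e2]
          dsimp only
          rcases le_total (g₁ ζ - h₁ ζ) (g₂ ζ - h₂ ζ) with h | h
          · rw [max_eq_right h, max_eq_right (by linarith)]; ring
          · rw [max_eq_left h, max_eq_left (by linarith)]; ring)
        (by
          intro v x y
          obtain ⟨ζ, rfl⟩ := Quotient.exists_rep x
          obtain ⟨ω, rfl⟩ := Quotient.exists_rep y
          by_cases hxy : (Quotient.mk (gSetoid M) ζ : Quotient (gSetoid M)) = Quotient.mk (gSetoid M) ω
          · obtain ⟨g', hg', h', hh', hrep⟩ :=
              exists_affine (GSet.const_mem (M := M) zero_le_one) 0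
                (v (Quotient.mk (gSetoid M) ζ))
            refine ⟨ContinuousMap.const _ (v (Quotient.mk (gSetoid M) ζ)),
              ⟨g', hg', h', hh', fun ξ => ?_⟩, by simp, by rw [← hxy]; simp⟩
            have := hrep ξ
            simpa using this
          · have hne : ¬ ∀ g ∈ GSet M, g ζ = g ω := fun h => hxy (Quotient.sound h)
            push_neg at hne
            obtain ⟨g, hg, hgne⟩ := hne
            have hab : g ζ - g ω ≠ 0 := sub_ne_zero_of_ne hgne
            set β : ℝ := (v (Quotient.mk (gSetoid M) ζ) - v (Quotient.mk (gSetoid M) ω)) /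
              (g ζ - g ω) with hβ
            set α : ℝ := v (Quotient.mk (gSetoid M) ζ) - β * g ζ with hα
            obtain ⟨g', hg', h', hh', hrep⟩ := exists_affine hg β α
            refine ⟨⟨fun t => β * glift hg t + α,
              (continuous_const.mul (glift hg).continuous).add continuous_const⟩,
              ⟨g', hg', h', hh', fun ξ => hrep ξ⟩, ?_, ?_⟩
            · show β * g ζ + α = _
              rw [hα]; ring
            · show β * g ω + α = _
              rw [hα, hβ]
              field_simp
              ring)
      rw [this]; rfl
    -- all continuous functions on `Q` have equal integrals
    have hcont_int : ∀ (m : Measure (Quotient (gSetoid M))) [IsFiniteMeasure m],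
        Continuous (fun f : C(Quotient (gSetoid M), ℝ) => ∫ t, f t ∂m) := by
      intro m _
      refine LipschitzWith.continuous (K := (m Set.univ).toNNReal)
        (LipschitzWith.of_dist_le_mul fun f g => ?_)
      rw [dist_eq_norm, ← integral_sub (hintQ m f) (hintQ m g)]
      calc ‖∫ t, (f t - g t) ∂m‖ ≤ dist f g * (m Set.univ).toReal := by
            refine norm_integral_le_of_norm_le_const (Filter.Eventually.of_forall fun t => ?_)
            rw [← dist_eq_norm]
            exact ContinuousMap.dist_apply_le_dist t
        _ = (m Set.univ).toNNReal * dist f g := by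
            rw [mul_comm]; rfl
    set L : Set C(Quotient (gSetoid M), ℝ) := {f | ∫ t, f t ∂μ' = ∫ t, f t ∂ν'} with hL
    have hLclosed : IsClosed L := by
      have : L = (fun f : C(Quotient (gSetoid M), ℝ) => ∫ t, f t ∂μ' - ∫ t, f t ∂ν') ⁻¹' {0} := by
        ext f; simp [hL, sub_eq_zero]
      rw [this]
      exact IsClosed.preimage ((hcont_int μ').sub (hcont_int ν')) isClosed_singleton
    have hAL : A ⊆ L := by
      rintro f ⟨g, hg, h, hh, hrep⟩
      show ∫ t, f t ∂μ' = ∫ t, f t ∂ν'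
      rw [hμ', hν', integral_map hq_meas.aemeasurable f.continuous.aestronglyMeasurable,
        integral_map hq_meas.aemeasurable f.continuous.aestronglyMeasurable]
      simp only [hrep]
      rw [integral_sub (hintK μ g hg.1) (hintK μ h hh.1),
        integral_sub (hintK ν g hg.1) (hintK ν h hh.1), heq g hg, heq h hh]
    have hint : ∀ f : C(Quotient (gSetoid M), ℝ), ∫ t, f t ∂μ' = ∫ t, f t ∂ν' := by
      have hsub : closure A ⊆ L := hLclosed.closure_subset_iff.mpr hAL
      rw [hclos] at hsub
      exact fun f => hsub (Set.mem_univ f)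
    -- finite inner regular measures with equal integrals of continuous functions agree
    have hle : ∀ (m m' : Measure (Quotient (gSetoid M))), IsFiniteMeasure m → IsFiniteMeasure m' → m.InnerRegular →
        (∀ f : C(Quotient (gSetoid M), ℝ), ∫ t, f t ∂m = ∫ t, f t ∂m') →
        ∀ U : Set (Quotient (gSetoid M)), IsOpen U → m U ≤ m' U := by
      intro m m' hm hm' hreg hmm' U hU
      haveI := hm; haveI := hm'; haveI := hreg
      by_contra hcon
      push_neg at hcon
      obtain ⟨C, hCU, hC, hlt⟩ := hU.measurableSet.exists_lt_isCompact hcon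
      have hCc : IsClosed C := hC.isClosed
      obtain ⟨f, hf0, hf1, hf01⟩ := exists_continuous_zero_one_of_isClosed
        hU.isClosed_compl hCc (Set.disjoint_left.mpr fun a ha haC => ha (hCU haC))
      have h1 : (m C).toReal ≤ ∫ t, f t ∂m := by
        rw [← measureReal_def, ← integral_indicator_one hCc.measurableSet]
        refine integral_mono ((integrable_const (1 : ℝ)).indicator hCc.measurableSet)
          (hintQ m f) fun t => ?_
        by_cases ht : t ∈ C
        · simp [Set.indicator_of_mem ht, hf1 ht]
        · simpa [Set.indicator_of_notMem ht] using (hf01 t).1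
      have h2 : ∫ t, f t ∂m' ≤ (m' U).toReal := by
        rw [← measureReal_def, ← integral_indicator_one hU.measurableSet]
        refine integral_mono (hintQ m' f)
          ((integrable_const (1 : ℝ)).indicator hU.measurableSet) fun t => ?_
        by_cases ht : t ∈ U
        · simpa [Set.indicator_of_mem ht] using (hf01 t).2
        · simp [Set.indicator_of_notMem ht, hf0 ht]
      have h3 : (m C).toReal ≤ (m' U).toReal := by
        calc (m C).toReal ≤ ∫ t, f t ∂m := h1
          _ = ∫ t, f t ∂m' := hmm' f
          _ ≤ (m' U).toReal := h2
      exact absurd hlt (not_lt.mpr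
        ((ENNReal.toReal_le_toReal (measure_ne_top m C) (measure_ne_top m' U)).mp h3))
    refine ext_of_generate_finite {s : Set (Quotient (gSetoid M)) | IsOpen s} ?_ isPiSystem_isOpen ?_ ?_
    · exact BorelSpace.measurable_eq
    · intro U hU
      exact le_antisymm (hle μ' ν' inferInstance inferInstance inferInstance hint U hU)
        (hle ν' μ' inferInstance inferInstance inferInstance (fun f => (hint f).symm) U hU)
    · have h1 := hint 1
      simp only [ContinuousMap.one_apply, integral_const, smul_eq_mul, mul_one] at h1
      exact (ENNReal.toReal_eq_toReal_iff' (measure_ne_top _ _) (measure_ne_top _ _)).mp h1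
  · intro hmap
    constructor <;> intro g hg
    · rw [key μ hg, key ν hg, hmap]
    · rw [key μ hg, key ν hg, hmap]
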